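/- For full-column-rank M ∈ ℝ^{k×d}, the least-squares estimator under the mechanism e = Mx + N(0, σ²I_k) attains MSE σ² trace((MᵀM)⁻¹)/d ≥ 1/dFIL, with equality if and only if all eigenvalues of MᵀM are equal. -/

import Mathlib

open Finset

lemma pair_aux {x y : ℝ} (hx : 0 < x) (hy : 0 < y) :
    2 ≤ x / y + y / x ∧ (x / y + y / x = 2 ↔ x = y) := by
  have hxy : 0 < x * y := mul_pos hx hy
  constructor
  · rw [div_add_div _ _ hy.ne' hx.ne', le_div_iff₀ (mul_pos hy hx)]
    nlinarith [sq_nonneg (x - y)]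
  · constructor
    · intro h
      rw [div_add_div _ _ hy.ne' hx.ne', div_eq_iff (mul_pos hy hx).ne'] at h
      nlinarith [sq_nonneg (x - y)]
    · rintro rfl
      rw [div_self hx.ne']; norm_num

lemma amhm_aux {n : ℕ} (f : Fin n → ℝ) (hf : ∀ i, 0 < f i) :
    ((n : ℝ)) ^ 2 ≤ (∑ i, f i) * (∑ i, (f i)⁻¹) ∧
    ((∑ i, f i) * (∑ i, (f i)⁻¹) = (n : ℝ) ^ 2 ↔ ∀ i j, f i = f j) := by
  have hT : (∑ i, f i) * (∑ i, (f i)⁻¹) = ∑ i, ∑ j, f i / f j := by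
    rw [Finset.sum_mul_sum]
    simp [div_eq_mul_inv]
  have hswap : (∑ i, ∑ j, f i / f j : ℝ) = ∑ i, ∑ j, f j / f i := Finset.sum_comm
  have h2T : 2 * ((∑ i, f i) * (∑ i, (f i)⁻¹)) = ∑ i, ∑ j, (f i / f j + f j / f i) := by
    rw [two_mul, hT]
    nth_rewrite 2 [hswap]
    rw [← Finset.sum_add_distrib]
    congr 1; ext i
    rw [← Finset.sum_add_distrib]
  have hle : ∀ i ∈ Finset.univ (α := Fin n), ∀ j ∈ Finset.univ (α := Fin n),
      (2 : ℝ) ≤ f i / f j + f j / f i := fun i _ j _ => (pair_aux (hf i) (hf j)).1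
  have hsumle : (2 : ℝ) * (n : ℝ) ^ 2 ≤ ∑ i, ∑ j, (f i / f j + f j / f i) := by
    calc (2 : ℝ) * (n : ℝ) ^ 2 = ∑ _i : Fin n, ∑ _j : Fin n, (2 : ℝ) := by
          simp [Finset.sum_const]; ring
      _ ≤ ∑ i, ∑ j, (f i / f j + f j / f i) := by
          apply Finset.sum_le_sum
          intro i hi
          exact Finset.sum_le_sum (hle i hi)
  constructor
  · nlinarith [h2T, hsumle]
  · constructor
    · intro h
      have hinner_le : ∀ i ∈ Finset.univ (α := Fin n),
          (n : ℝ) * 2 ≤ ∑ j, (f i / f j + f j / f i) := by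
        intro i _
        calc (n : ℝ) * 2 = ∑ _j : Fin n, (2 : ℝ) := by simp [Finset.sum_const, mul_comm]
          _ ≤ _ := Finset.sum_le_sum (hle i (Finset.mem_univ i))
      have hsum_eq : ∑ _i : Fin n, ((n : ℝ) * 2) = ∑ i, ∑ j, (f i / f j + f j / f i) := by
        rw [← h2T, h]
        simp [Finset.sum_const]
        ring
      have houter := (Finset.sum_eq_sum_iff_of_le hinner_le).1 hsum_eq
      intro i j
      have hinner_eq : ∑ _j : Fin n, (2 : ℝ) = ∑ j, (f i / f j + f j / f i) := by
        have := houter i (Finset.mem_univ i)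
        simpa [Finset.sum_const, mul_comm] using this
      have hterm := (Finset.sum_eq_sum_iff_of_le
        (fun j hj => hle i (Finset.mem_univ i) j hj)).1 hinner_eq j (Finset.mem_univ j)
      exact (pair_aux (hf i) (hf j)).2.1 hterm.symm
    · intro h
      rcases Nat.eq_zero_or_pos n with hn | hn
      · subst hn; simp
      · set i0 : Fin n := ⟨0, hn⟩
        have hc : f i0 ≠ 0 := (hf i0).ne'
        have h1 : ∑ i, f i = (n : ℝ) * f i0 := by
          rw [Finset.sum_congr rfl fun i _ => h i i0]
          simp [Finset.sum_const, mul_comm]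
        have h2 : ∑ i, (f i)⁻¹ = (n : ℝ) * (f i0)⁻¹ := by
          rw [Finset.sum_congr rfl fun i _ => by rw [h i i0]]
          simp [Finset.sum_const, mul_comm]
        rw [h1, h2]
        field_simp

/-- For full-column-rank `M ∈ ℝ^{k×d}`, the least-squares estimator under the mechanism
`e = Mx + N(0, σ²I_k)` attains MSE `σ² trace((MᵀM)⁻¹)/d ≥ 1/dFIL` where
`dFIL = trace(MᵀM)/(d σ²)`, with equality iff all eigenvalues of `MᵀM` are equal. -/
theorem least_squares_mse_ge_inv_dfil
    (d k : ℕ) (hd : 0 < d) (σ : ℝ) (hσ : 0 < σ)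
    (M : Matrix (Fin k) (Fin d) ℝ) (hrank : M.rank = d)
    (hA : (M.transpose * M).IsHermitian) :
    σ ^ 2 * (M.transpose * M)⁻¹.trace / d ≥
      1 / ((M.transpose * M).trace / (d * σ ^ 2)) ∧
    (σ ^ 2 * (M.transpose * M)⁻¹.trace / d =
        1 / ((M.transpose * M).trace / (d * σ ^ 2)) ↔
      ∀ i j, hA.eigenvalues i = hA.eigenvalues j) := by
  classical
  set A : Matrix (Fin d) (Fin d) ℝ := M.transpose * M with hAdef
  set lam : Fin d → ℝ := hA.eigenvalues with hlam
  -- positivity of eigenvalues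
  have hpsd : A.PosSemidef := by
    have := Matrix.posSemidef_conjTranspose_mul_self M
    rwa [Matrix.conjTranspose_eq_transpose_of_trivial] at this
  have hnonneg : ∀ i, 0 ≤ lam i := fun i => hpsd.eigenvalues_nonneg i
  have hArank : A.rank = d := by rw [hAdef, Matrix.rank_transpose_mul_self, hrank]
  have hne : ∀ i, lam i ≠ 0 := by
    intro i hi
    have hcard := hA.rank_eq_card_non_zero_eigs
    rw [hArank] at hcard
    have := Fintype.card_subtype_lt (p := fun j => hA.eigenvalues j ≠ 0) (x := i) (by simpa using hi)
    simp only [Fintype.card_fin] at this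
    omega
  have hpos : ∀ i, 0 < lam i := fun i => lt_of_le_of_ne (hnonneg i) (Ne.symm (hne i))
  -- spectral computations
  set U : Matrix (Fin d) (Fin d) ℝ := (hA.eigenvectorUnitary : Matrix (Fin d) (Fin d) ℝ) with hU
  have hUstar : star U * U = 1 := Unitary.coe_star_mul_self _
  have hUstar' : U * star U = 1 := Unitary.coe_mul_star_self _
  have hspec : A = U * Matrix.diagonal lam * star U := by
    have := hA.spectral_theorem
    simpa using this
  have htrA : A.trace = ∑ i, lam i := by
    rw [hspec, Matrix.trace_mul_cycle, hUstar, Matrix.one_mul, Matrix.trace_diagonal]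
  have hinv : A⁻¹ = U * Matrix.diagonal (fun i => (lam i)⁻¹) * star U := by
    apply Matrix.inv_eq_right_inv
    rw [hspec]
    calc U * Matrix.diagonal lam * star U * (U * Matrix.diagonal (fun i => (lam i)⁻¹) * star U)
        = U * Matrix.diagonal lam * (star U * U) * (Matrix.diagonal (fun i => (lam i)⁻¹) * star U) := by
          simp only [Matrix.mul_assoc]
      _ = U * (Matrix.diagonal lam * Matrix.diagonal (fun i => (lam i)⁻¹)) * star U := by
          rw [hUstar, Matrix.mul_one]
          simp only [Matrix.mul_assoc]
      _ = U * star U := by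
          rw [Matrix.diagonal_mul_diagonal]
          have : (fun i => lam i * (lam i)⁻¹) = fun _ : Fin d => (1 : ℝ) := by
            funext i; exact mul_inv_cancel₀ (hne i)
          rw [this, Matrix.diagonal_one, Matrix.mul_one]
      _ = 1 := hUstar'
  have htrAinv : A⁻¹.trace = ∑ i, (lam i)⁻¹ := by
    rw [hinv, Matrix.trace_mul_cycle, hUstar, Matrix.one_mul, Matrix.trace_diagonal]
  -- AM-HM
  obtain ⟨hAM, hAMeq⟩ := amhm_aux lam hpos
  have htrApos : 0 < A.trace := by
    rw [htrA]
    exact Finset.sum_pos (fun i _ => hpos i) ⟨⟨0, hd⟩, Finset.mem_univ _⟩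
  have htrAinvpos : 0 < A⁻¹.trace := by
    rw [htrAinv]
    exact Finset.sum_pos (fun i _ => inv_pos.mpr (hpos i)) ⟨⟨0, hd⟩, Finset.mem_univ _⟩
  have hdpos : (0 : ℝ) < d := Nat.cast_pos.mpr hd
  have hσ2 : (0 : ℝ) < σ ^ 2 := by positivity
  have hkey : (d : ℝ) ^ 2 ≤ A.trace * A⁻¹.trace := by
    rw [htrA, htrAinv]; exact hAM
  have hRHS : 1 / (A.trace / (↑d * σ ^ 2)) = (↑d * σ ^ 2) / A.trace := one_div_div _ _
  constructor
  · rw [ge_iff_le, hRHS, div_le_div_iff₀ htrApos (by positivity)]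
    nlinarith [hkey, hσ2]
  · rw [hRHS]
    constructor
    · intro h
      have h' := (div_eq_div_iff hdpos.ne' htrApos.ne').1 h
      have h2 : σ ^ 2 * (A.trace * A⁻¹.trace) = σ ^ 2 * (d : ℝ) ^ 2 := by
        linear_combination h'
      have heq : A.trace * A⁻¹.trace = (d : ℝ) ^ 2 :=
        mul_left_cancel₀ (pow_ne_zero 2 hσ.ne') h2
      rw [htrA, htrAinv] at heq
      exact hAMeq.1 heq
    · intro h
      have heq : A.trace * A⁻¹.trace = (d : ℝ) ^ 2 := by
        rw [htrA, htrAinv]; exact hAMeq.2 h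
      rw [div_eq_div_iff hdpos.ne' htrApos.ne']
      linear_combination σ ^ 2 * heq
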